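/- For every noncomputable set A, the class of sets B such that Γ_B(A) = 1/2 has measure 1. -/

import Mathlib

open MeasureTheory

/-- For every noncomputable set `A`, measure-1 many `B` satisfy `Γ_B(A) = 1/2`.
Here `μ` is the fair-coin measure on Cantor space, `Gamma A B` denotes `Γ_B(A)`,
`leT X B` means `B ≥_T X`, and `Rand A B` means `B` is 1-random relative to `A`;
the facts listed in the paper (the values of `Γ`, `Γ_B(A) = 1 ↔ B ≥_T A`,
randomness has measure one and forces `Γ_B(A) ≥ 1/2`, and Sacks' theorem)
are hypotheses. -/
theorem measure_one_Gamma_half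
    (μ : Measure (ℕ → Bool)) [IsProbabilityMeasure μ]
    (Gamma : (ℕ → Bool) → (ℕ → Bool) → ℝ)
    (leT : (ℕ → Bool) → (ℕ → Bool) → Prop)
    (Rand : (ℕ → Bool) → (ℕ → Bool) → Prop)
    (hvals : ∀ A B, Gamma A B = 0 ∨ Gamma A B = 1/2 ∨ Gamma A B = 1)
    (hone : ∀ A B, Gamma A B = 1 ↔ leT A B)
    (hrand_meas : ∀ A, μ {B | Rand A B} = 1)
    (hrand_half : ∀ A B, Rand A B → 1/2 ≤ Gamma A B)
    (hSacks : ∀ X : ℕ → Bool, ¬ Computable X → μ {B | leT X B} = 0)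
    (A : ℕ → Bool) (hA : ¬ Computable A) :
    μ {B | Gamma A B = 1/2} = 1 := by
  have hsub : {B | Rand A B} ∩ {B | Gamma A B = 1/2}ᶜ ⊆ {B | leT A B} := by
    intro B hB
    rcases hvals A B with h0 | hhalf | h1
    · exfalso
      have := hrand_half A B hB.1
      rw [h0] at this
      norm_num at this
    · exact absurd hhalf hB.2
    · exact (hone A B).mp h1
  have hle : μ {B | Rand A B} ≤ μ ({B | Rand A B} ∩ {B | Gamma A B = 1/2})
      + μ ({B | Rand A B} \ {B | Gamma A B = 1/2}) :=
    measure_le_inter_add_diff μ _ _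
  have hdiff : μ ({B | Rand A B} \ {B | Gamma A B = 1/2}) = 0 :=
    le_antisymm (le_trans (measure_mono hsub) (le_of_eq (hSacks A hA))) zero_le
  have h1 : (1 : ENNReal) ≤ μ ({B | Rand A B} ∩ {B | Gamma A B = 1/2}) := by
    rw [hdiff, add_zero, hrand_meas A] at hle
    exact hle
  refine le_antisymm prob_le_one ?_
  exact h1.trans (measure_mono Set.inter_subset_right)
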